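/- If R is an additively periodic ring, then the full matrix ring M_n(R) is additively periodic: every matrix is the sum of a strictly upper triangular matrix, a strictly lower triangular matrix (both nilpotent, hence periodic), and a diagonal matrix that is a finite sum of periodic diagonal matrices. -/

import Mathlib

/-- An element of a ring is periodic if `x ^ n = x ^ m` for some `n > m ≥ 1`. -/
def IsPeriodicElem {R : Type*} [Ring R] (x : R) : Prop :=
  ∃ n m : ℕ, 1 ≤ m ∧ m < n ∧ x ^ n = x ^ m

/-- A ring is additively periodic if every element is a finite sum of periodic elements. -/
def AdditivelyPeriodic (R : Type*) [Ring R] : Prop :=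
  ∀ a : R, ∃ l : List R, (∀ x ∈ l, IsPeriodicElem x) ∧ l.sum = a

private def GoodSum {R : Type*} [Ring R] (a : R) : Prop :=
  ∃ l : List R, (∀ x ∈ l, IsPeriodicElem x) ∧ l.sum = a

private lemma goodSum_zero {R : Type*} [Ring R] : GoodSum (0 : R) :=
  ⟨[], by simp, by simp⟩

private lemma goodSum_add {R : Type*} [Ring R] {a b : R} (ha : GoodSum a) (hb : GoodSum b) :
    GoodSum (a + b) := by
  obtain ⟨l1, h1, s1⟩ := ha
  obtain ⟨l2, h2, s2⟩ := hb
  exact ⟨l1 ++ l2, by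
    intro x hx
    rcases List.mem_append.mp hx with h | h
    · exact h1 x h
    · exact h2 x h, by simp [s1, s2]⟩

private lemma goodSum_sum {R : Type*} [Ring R] {ι : Type*} (s : Finset ι) (f : ι → R)
    (hf : ∀ i ∈ s, GoodSum (f i)) : GoodSum (∑ i ∈ s, f i) := by
  classical
  induction s using Finset.induction with
  | empty => simpa using goodSum_zero
  | insert _ _ hi ih =>
    rw [Finset.sum_insert hi]
    exact goodSum_add (hf _ (Finset.mem_insert_self _ _))
      (ih fun i hi' => hf i (Finset.mem_insert_of_mem hi'))

private lemma stdBasis_pow_diag {R : Type*} [Ring R] {n : ℕ} (i : Fin n) (x : R) :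
    ∀ k : ℕ, 1 ≤ k →
      (Matrix.single i i x) ^ k = Matrix.single i i (x ^ k) := by
  intro k hk
  induction k with
  | zero => omega
  | succ k ih =>
    rcases Nat.eq_or_lt_of_le hk with h | h
    · simp [← h]
    · have hk1 : 1 ≤ k := by omega
      rw [pow_succ, ih hk1, Matrix.single_mul_single_same, ← pow_succ]

private lemma stdBasis_map_sum {R : Type*} [Ring R] {n : ℕ} (i : Fin n) (l : List R) :
    (l.map (Matrix.single i i)).sum = Matrix.single i i l.sum := by
  induction l with
  | nil => simp [Matrix.single_zero]
  | cons x xs ih =>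
    simp only [List.map_cons, List.sum_cons, ih, Matrix.single_add]

theorem matrix_ring_additively_periodic {R : Type*} [Ring R] (n : ℕ)
    (h : AdditivelyPeriodic R) :
    AdditivelyPeriodic (Matrix (Fin n) (Fin n) R) := by
  classical
  intro a
  have key : ∀ i j : Fin n, GoodSum (Matrix.single i j (a i j)) := by
    intro i j
    by_cases hij : i = j
    · subst hij
      obtain ⟨l, hl, hs⟩ := h (a i i)
      refine ⟨l.map (Matrix.single i i), ?_, ?_⟩
      · intro x hx
        obtain ⟨y, hy, rfl⟩ := List.mem_map.mp hx
        obtain ⟨N, M, hM, hMN, hNM⟩ := hl y hy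
        exact ⟨N, M, hM, hMN, by
          rw [stdBasis_pow_diag i y N (by omega), stdBasis_pow_diag i y M hM, hNM]⟩
      · rw [← hs]
        exact stdBasis_map_sum i l
    · refine ⟨[Matrix.single i j (a i j)], ?_, by simp⟩
      intro x hx
      simp only [List.mem_singleton] at hx
      subst hx
      have hsq : (Matrix.single i j (a i j)) ^ 2 = 0 := by
        rw [sq]
        exact Matrix.single_mul_single_of_ne (c := a i j) i j i (Ne.symm hij) (a i j)
      exact ⟨3, 2, by omega, by omega, by
        rw [show (3 : ℕ) = 2 + 1 from rfl, pow_succ, hsq, zero_mul]⟩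
  rw [Matrix.matrix_eq_sum_single a]
  exact goodSum_sum _ _ fun i _ => goodSum_sum _ _ fun j _ => key i j
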